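/- Let μ, s ∈ ℝ be constants, let ŵ ∈ ISO⁺(2,1) be a fixed element, let t₀, φ₀ : ℝ → ℝ be differentiable, and set w(x⁰) = ŵ·exp( (μφ₀(x⁰)/(2π))Ĵ₀ + (t₀(x⁰) + sφ₀(x⁰)/(2π))P̂₀ ). Then for every x⁰: −⟨ μĴ₀ + sP̂₀, w(x⁰)⁻¹w′(x⁰) ⟩ = −μ·t₀′(x⁰) − (μs/(2π))·φ₀′(x⁰) − (d/dx⁰)( μs·φ₀(x⁰)/(2π) ). (Equation (4.27): in a centre of mass frame, where w is restricted to the abelian subgroup T_𝔠, the kinetic term of the boundary variables reduces, up to a total time derivative, to −μ∂₀t₀ − (μs/2π)∂₀φ₀, yielding the centre of mass action (4.28).) -/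

import Mathlib

open Matrix

noncomputable section

attribute [local instance] Matrix.normedAddCommGroup Matrix.normedSpace

/-- The Minkowski metric matrix diag(1,-1,-1). -/
def η3 : Matrix (Fin 3) (Fin 3) ℝ := Matrix.diagonal ![1, -1, -1]

/-- The Minkowski bilinear form on ℝ³. -/
def mink (x y : Fin 3 → ℝ) : ℝ := x 0 * y 0 - x 1 * y 1 - x 2 * y 2

/-- The Minkowski cross product. -/
def crossM (p q : Fin 3 → ℝ) : Fin 3 → ℝ :=
  ![p 1 * q 2 - p 2 * q 1, p 0 * q 2 - p 2 * q 0, p 1 * q 0 - p 0 * q 1]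

/-- The map M : ℝ³ → so(2,1), M(p)q = p ×_η q. -/
def Mmap (p : Fin 3 → ℝ) : Matrix (Fin 3) (Fin 3) ℝ :=
  !![0, -(p 2), p 1; -(p 2), 0, p 0; p 1, -(p 0), 0]

/-- The inverse m : so(2,1) → ℝ³ of M (extracted entrywise). -/
def mser (X : Matrix (Fin 3) (Fin 3) ℝ) : Fin 3 → ℝ := ![X 1 2, X 0 2, -(X 0 1)]

/-- Membership in SO⁺(2,1). -/
def IsSOplus (v : Matrix (Fin 3) (Fin 3) ℝ) : Prop :=
  vᵀ * η3 * v = η3 ∧ v.det = 1 ∧ 0 < v 0 0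

/-- so(2,1) as a set of 3×3 matrices. -/
def IsSO21 (X : Matrix (Fin 3) (Fin 3) ℝ) : Prop := Xᵀ * η3 + η3 * X = 0

/-- The 4×4 Poincaré matrix [[v,x],[0,1]]. -/
def pmat (v : Matrix (Fin 3) (Fin 3) ℝ) (x : Fin 3 → ℝ) : Matrix (Fin 4) (Fin 4) ℝ :=
  Matrix.of fun i j =>
    if hi : (i : ℕ) < 3 then
      if hj : (j : ℕ) < 3 then v ⟨i, hi⟩ ⟨j, hj⟩ else x ⟨i, hi⟩
    else if (j : ℕ) < 3 then 0 else 1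

/-- The 4×4 iso(2,1) matrix [[X,b],[0,0]]. -/
def amat (X : Matrix (Fin 3) (Fin 3) ℝ) (b : Fin 3 → ℝ) : Matrix (Fin 4) (Fin 4) ℝ :=
  Matrix.of fun i j =>
    if hi : (i : ℕ) < 3 then
      if hj : (j : ℕ) < 3 then X ⟨i, hi⟩ ⟨j, hj⟩ else b ⟨i, hi⟩
    else 0

/-- Membership in the Poincaré group ISO⁺(2,1) ⊂ GL₄(ℝ). -/
def IsISO (g : Matrix (Fin 4) (Fin 4) ℝ) : Prop :=
  ∃ v x, IsSOplus v ∧ g = pmat v x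

/-- Membership in the Lie algebra iso(2,1). -/
def IsISOAlg (ξ : Matrix (Fin 4) (Fin 4) ℝ) : Prop :=
  ∃ X b, IsSO21 X ∧ ξ = amat X b

/-- Standard basis vectors of ℝ³. -/
def e3 (a : Fin 3) : Fin 3 → ℝ := Pi.single a 1

/-- The rotation/boost generators Ĵ_a of iso(2,1). -/
def Jhat (a : Fin 3) : Matrix (Fin 4) (Fin 4) ℝ := amat (Mmap (e3 a)) 0

/-- The translation generators P̂_a of iso(2,1). -/
def Phat (a : Fin 3) : Matrix (Fin 4) (Fin 4) ℝ := amat 0 (e3 a)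

/-- The invariant pairing ⟨[[X,b],0],[[Y,c],0]⟩ = η(m X, c) + η(m Y, b) on iso(2,1). -/
def pairIso (ξ ζ : Matrix (Fin 4) (Fin 4) ℝ) : ℝ :=
  mink ![ξ 1 2, ξ 0 2, -(ξ 0 1)] ![ζ 0 3, ζ 1 3, ζ 2 3]
  + mink ![ζ 1 2, ζ 0 2, -(ζ 0 1)] ![ξ 0 3, ξ 1 3, ξ 2 3]

/-- Ordered product U_k(ε) = u_{k-1}(ε)⋯u_0(ε) (with U_0 = 1). -/
def ordProd {n : ℕ} (u : ℕ → ℝ → Matrix (Fin n) (Fin n) ℝ) : ℕ → ℝ → Matrix (Fin n) (Fin n) ℝ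
  | 0 => fun _ => 1
  | k + 1 => fun ε => u k ε * ordProd u k ε

-- auxiliary
def Jc : Matrix (Fin 4) (Fin 4) ℝ := !![0,0,0,0; 0,0,1,0; 0,-1,0,0; 0,0,0,0]
def Pc : Matrix (Fin 4) (Fin 4) ℝ := !![0,0,0,1; 0,0,0,0; 0,0,0,0; 0,0,0,0]
def J2c : Matrix (Fin 4) (Fin 4) ℝ := !![0,0,0,0; 0,-1,0,0; 0,0,-1,0; 0,0,0,0]

lemma Jhat0_eq : Jhat 0 = Jc := by
  ext i j
  fin_cases i <;> fin_cases j <;>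
    simp [Jhat, amat, Mmap, e3, Pi.single_apply, Jc] <;>
    first | rfl | (intro h; exact absurd h (by decide)) | decide

lemma Phat0_eq : Phat 0 = Pc := by
  ext i j
  fin_cases i <;> fin_cases j <;>
    simp [Phat, amat, e3, Pi.single_apply, Pc] <;>
    first | rfl | (intro h; exact absurd h (by decide)) | decide

lemma JJ_eq : Jc * Jc = J2c := by
  ext i j; fin_cases i <;> fin_cases j <;>
    simp [Jc, J2c, Matrix.mul_apply, Fin.sum_univ_four] <;> norm_num [Matrix.vecHead, Matrix.vecTail]
lemma JP_eq : Jc * Pc = 0 := by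
  ext i j; fin_cases i <;> fin_cases j <;>
    simp [Jc, Pc, Matrix.mul_apply, Fin.sum_univ_four] <;> norm_num [Matrix.vecHead, Matrix.vecTail]
lemma PJ_eq : Pc * Jc = 0 := by
  ext i j; fin_cases i <;> fin_cases j <;>
    simp [Jc, Pc, Matrix.mul_apply, Fin.sum_univ_four] <;> norm_num [Matrix.vecHead, Matrix.vecTail]
lemma PP_eq : Pc * Pc = 0 := by
  ext i j; fin_cases i <;> fin_cases j <;>
    simp [Pc, Matrix.mul_apply, Fin.sum_univ_four] <;> norm_num [Matrix.vecHead, Matrix.vecTail]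
lemma J2J_eq : J2c * Jc = -Jc := by
  ext i j; fin_cases i <;> fin_cases j <;>
    simp [Jc, J2c, Matrix.mul_apply, Fin.sum_univ_four] <;> norm_num [Matrix.vecHead, Matrix.vecTail]
lemma J2P_eq : J2c * Pc = 0 := by
  ext i j; fin_cases i <;> fin_cases j <;>
    simp [Pc, J2c, Matrix.mul_apply, Fin.sum_univ_four] <;> norm_num [Matrix.vecHead, Matrix.vecTail]
lemma J2J2_eq : J2c * J2c = -J2c := by
  ext i j; fin_cases i <;> fin_cases j <;>
    simp [J2c, Matrix.mul_apply, Fin.sum_univ_four] <;> norm_num [Matrix.vecHead, Matrix.vecTail]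

def gmat (a b : ℝ) : Matrix (Fin 4) (Fin 4) ℝ :=
  1 + Real.sin a • Jc + (1 - Real.cos a) • J2c + b • Pc

lemma exp_closed (a b : ℝ) :
    NormedSpace.exp (a • Jc + b • Pc) = gmat a b := by
  set A : Matrix (Fin 4) (Fin 4) ℝ := a • Jc + b • Pc with hA
  have hA2 : A * A = (a * a) • J2c := by
    rw [hA, add_mul, mul_add, mul_add, smul_mul_smul_comm, smul_mul_smul_comm,
      smul_mul_smul_comm, smul_mul_smul_comm, JJ_eq, JP_eq, PJ_eq, PP_eq]
    simp
  have hJ2A : J2c * A = (-a) • Jc := by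
    rw [hA, mul_add, Matrix.mul_smul, Matrix.mul_smul, J2J_eq, J2P_eq]
    simp
  have hpe : ∀ k : ℕ, A ^ (2*k+2) = ((-1:ℝ)^k * a^(2*k+2)) • J2c := by
    intro k
    induction k with
    | zero => rw [show 2*0+2 = 2 by rfl, pow_two, hA2]; norm_num [pow_two]
    | succ n ih =>
      have h1 : 2*(n+1)+2 = (2*n+2) + 2 := by ring
      rw [h1, pow_add, ih, pow_two, hA2, smul_mul_assoc, Matrix.mul_smul, J2J2_eq]
      simp only [smul_neg, smul_smul, ← neg_smul]
      congr 1
      ring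
  have hpo : ∀ k : ℕ, A ^ (2*k+3) = ((-1:ℝ)^(k+1) * a^(2*k+3)) • Jc := by
    intro k
    rw [show 2*k+3 = (2*k+2)+1 by ring, pow_succ, hpe k, smul_mul_assoc, hJ2A,
      smul_smul]
    congr 1
    ring
  -- even part
  have hc := (hasSum_nat_add_iff' (f := fun n : ℕ => (-1:ℝ)^n * a^(2*n)/((Nat.factorial (2*n)) : ℝ)) 1).mpr
    (Real.hasSum_cos a)
  simp only [Finset.range_one, Finset.sum_singleton, pow_zero, mul_zero, one_mul,
    Nat.factorial_zero, Nat.cast_one, div_one] at hc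
  -- hc : HasSum (fun n => (-1)^(n+1) * a^(2*(n+1))/(2*(n+1))!) (cos a - 1)
  have hEven : HasSum (fun k : ℕ => (((Nat.factorial (2*(k+1))) : ℝ))⁻¹ • A ^ (2*(k+1)))
      ((1 - Real.cos a) • J2c) := by
    have h2 := (hc.neg).smul_const (a := J2c)
    rw [neg_sub] at h2
    convert h2 using 2 with k
    rw [show 2*(k+1) = 2*k+2 by ring, hpe k, smul_smul]
    congr 1
    rw [pow_succ]
    ring
  have hF : HasSum (fun k : ℕ => (((Nat.factorial (2*k)) : ℝ))⁻¹ • A ^ (2*k))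
      (1 + (1 - Real.cos a) • J2c) := by
    refine (hasSum_nat_add_iff' 1).mp ?_
    simp only [Finset.range_one, Finset.sum_singleton, Nat.mul_zero, pow_zero,
      Nat.factorial_zero, Nat.cast_one, inv_one, one_smul]
    simpa using hEven
  -- odd part
  have hs := (hasSum_nat_add_iff' (f := fun n : ℕ => (-1:ℝ)^n * a^(2*n+1)/((Nat.factorial (2*n+1)) : ℝ)) 1).mpr
    (Real.hasSum_sin a)
  simp only [Finset.range_one, Finset.sum_singleton, pow_zero, mul_zero, one_mul,
    Nat.factorial_one, Nat.cast_one, div_one, pow_one, zero_add] at hs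
  have hOdd : HasSum (fun k : ℕ => (((Nat.factorial (2*(k+1)+1)) : ℝ))⁻¹ • A ^ (2*(k+1)+1))
      ((Real.sin a - a) • Jc) := by
    have h2 := hs.smul_const (a := Jc)
    convert h2 using 2 with k
    rw [show 2*(k+1)+1 = 2*k+3 by ring, hpo k, smul_smul]
    congr 1
    ring
  have hG : HasSum (fun k : ℕ => (((Nat.factorial (2*k+1)) : ℝ))⁻¹ • A ^ (2*k+1))
      (A + (Real.sin a - a) • Jc) := by
    refine (hasSum_nat_add_iff' 1).mp ?_
    simp only [Finset.range_one, Finset.sum_singleton, Nat.mul_zero, zero_add, pow_one,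
      Nat.factorial_one, Nat.cast_one, inv_one, one_smul]
    simpa using hOdd
  have hTot : HasSum (fun n : ℕ => (((Nat.factorial (n)) : ℝ))⁻¹ • A ^ n)
      ((1 + (1 - Real.cos a) • J2c) + (A + (Real.sin a - a) • Jc)) :=
    HasSum.even_add_odd hF hG
  rw [NormedSpace.exp_eq_tsum ℝ]
  show (∑' (n : ℕ), ((Nat.factorial n : ℝ))⁻¹ • A ^ n) = gmat a b
  rw [hTot.tsum_eq, hA, gmat]
  ext i j
  simp only [Matrix.add_apply, Matrix.smul_apply, Matrix.one_apply, smul_eq_mul]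
  ring

lemma gmat_eq (a b : ℝ) : gmat a b =
    !![1,0,0,b; 0, Real.cos a, Real.sin a, 0; 0, -Real.sin a, Real.cos a, 0; 0,0,0,1] := by
  ext i j
  fin_cases i <;> fin_cases j <;>
    simp [gmat, Jc, Pc, J2c, Matrix.add_apply, Matrix.smul_apply, Matrix.one_apply] <;>
    norm_num [Matrix.vecHead, Matrix.vecTail]

lemma smul_comb_eq (c1 c2 c3 : ℝ) : c1 • Jc + c2 • J2c + c3 • Pc =
    !![0,0,0,c3; 0, -c2, c1, 0; 0, -c1, -c2, 0; 0,0,0,0] := by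
  ext i j
  fin_cases i <;> fin_cases j <;>
    simp [Jc, Pc, J2c, Matrix.add_apply, Matrix.smul_apply] <;>
    norm_num [Matrix.vecHead, Matrix.vecTail]

lemma gmat_mul_inv (a b : ℝ) : gmat (-a) (-b) * gmat a b = 1 := by
  rw [gmat_eq, gmat_eq]
  ext i j
  fin_cases i <;> fin_cases j <;>
    simp [Matrix.mul_apply, Fin.sum_univ_four, Matrix.one_apply, Real.sin_neg,
      Real.cos_neg, Matrix.vecHead, Matrix.vecTail] <;>
    nlinarith [Real.sin_sq_add_cos_sq a]

lemma gmat_inv_mul_D (a b a' b' : ℝ) :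
    gmat (-a) (-b) * ((Real.cos a * a') • Jc + (Real.sin a * a') • J2c + b' • Pc)
      = a' • Jc + b' • Pc := by
  rw [gmat_eq, smul_comb_eq]
  ext i j
  fin_cases i <;> fin_cases j <;>
    simp [Jc, Pc, Matrix.mul_apply, Fin.sum_univ_four, Real.sin_neg, Real.cos_neg,
      Matrix.add_apply, Matrix.smul_apply, Matrix.vecHead, Matrix.vecTail] <;>
    first
      | linear_combination a' * Real.sin_sq_add_cos_sq a
      | linear_combination (-a') * Real.sin_sq_add_cos_sq a
      | nlinarith [Real.sin_sq_add_cos_sq a]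

lemma hasDerivAt_matrix {f : ℝ → Matrix (Fin 4) (Fin 4) ℝ} {D : Matrix (Fin 4) (Fin 4) ℝ}
    {x : ℝ} (h : ∀ i j, HasDerivAt (fun t => f t i j) (D i j) x) : HasDerivAt f D x :=
  hasDerivAt_pi.mpr fun i => hasDerivAt_pi.mpr fun j => h i j

lemma eta_eta : η3 * η3 = 1 := by
  ext i j
  fin_cases i <;> fin_cases j <;>
    simp [η3, Matrix.mul_apply, Fin.sum_univ_three, Matrix.diagonal, Matrix.one_apply]

lemma pmat_inv_mul (u v : Matrix (Fin 3) (Fin 3) ℝ) (xv : Fin 3 → ℝ) (huv : u * v = 1) :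
    pmat u (-(u *ᵥ xv)) * pmat v xv = 1 := by
  have h00 := congrFun (congrFun huv 0) 0
  have h01 := congrFun (congrFun huv 0) 1
  have h02 := congrFun (congrFun huv 0) 2
  have h10 := congrFun (congrFun huv 1) 0
  have h11 := congrFun (congrFun huv 1) 1
  have h12 := congrFun (congrFun huv 1) 2
  have h20 := congrFun (congrFun huv 2) 0
  have h21 := congrFun (congrFun huv 2) 1
  have h22 := congrFun (congrFun huv 2) 2
  simp [Matrix.mul_apply, Fin.sum_univ_three, Matrix.one_apply] at h00 h01 h02 h10 h11 h12 h20 h21 h22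
  have e3v : ((3 : Fin 4) : ℕ) = 3 := rfl
  ext i j
  fin_cases i <;> fin_cases j <;>
    simp [pmat, Matrix.mul_apply, Fin.sum_univ_four, Matrix.mulVec, dotProduct, e3v,
      Fin.sum_univ_three, Matrix.one_apply, Matrix.vecHead, Matrix.vecTail] <;>
    linarith [h00, h01, h02, h10, h11, h12, h20, h21, h22]

lemma pair_val (μ s a' b' : ℝ) :
    pairIso (μ • Jhat 0 + s • Phat 0) (a' • Jc + b' • Pc) = μ * b' + a' * s := by
  rw [Jhat0_eq, Phat0_eq]
  simp only [pairIso, mink, Matrix.add_apply, Matrix.smul_apply, smul_eq_mul, Jc, Pc]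
  norm_num [Matrix.vecHead, Matrix.vecTail, Matrix.cons_val]
  simp [Matrix.cons_val]


/-- equation (4.27): in a centre of mass frame the kinetic term of the
boundary variables reduces, up to a total time derivative, to −μ∂₀t₀ − (μs/2π)∂₀φ₀. -/
theorem statement18 (μ s : ℝ) (what : Matrix (Fin 4) (Fin 4) ℝ) (hwhat : IsISO what)
    (t₀ φ₀ : ℝ → ℝ) (ht₀ : Differentiable ℝ t₀) (hφ₀ : Differentiable ℝ φ₀)
    (w : ℝ → Matrix (Fin 4) (Fin 4) ℝ)
    (hw : ∀ x, w x = what * NormedSpace.exp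
      ((μ * φ₀ x / (2 * Real.pi)) • Jhat 0 + (t₀ x + s * φ₀ x / (2 * Real.pi)) • Phat 0))
    (x : ℝ) :
    -pairIso (μ • Jhat 0 + s • Phat 0) ((w x)⁻¹ * deriv w x)
    = -(μ * deriv t₀ x) - (μ * s / (2 * Real.pi)) * deriv φ₀ x
      - deriv (fun y => μ * s * φ₀ y / (2 * Real.pi)) x := by
  obtain ⟨v, xv, hvp, hwe⟩ := hwhat
  set a : ℝ → ℝ := fun y => μ * φ₀ y / (2 * Real.pi) with ha
  set bb : ℝ → ℝ := fun y => t₀ y + s * φ₀ y / (2 * Real.pi) with hb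
  have hwf : w = fun y => what * gmat (a y) (bb y) := by
    funext y
    rw [hw y, Jhat0_eq, Phat0_eq, exp_closed]
  set a' : ℝ := μ * deriv φ₀ x / (2 * Real.pi) with ha'
  set b' : ℝ := deriv t₀ x + s * deriv φ₀ x / (2 * Real.pi) with hb'
  have haD : HasDerivAt a a' x :=
    (HasDerivAt.const_mul μ ((hφ₀ x).hasDerivAt)).div_const (2 * Real.pi)
  have hbD : HasDerivAt bb b' x :=
    ((ht₀ x).hasDerivAt).add ((HasDerivAt.const_mul s ((hφ₀ x).hasDerivAt)).div_const (2 * Real.pi))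
  have hsin : HasDerivAt (fun y => Real.sin (a y)) (Real.cos (a x) * a') x := haD.sin
  have hcos : HasDerivAt (fun y => 1 - Real.cos (a y)) (Real.sin (a x) * a') x := by
    simpa using (haD.cos).const_sub 1
  have hwf2 : w = fun y => what + Real.sin (a y) • (what * Jc)
      + (1 - Real.cos (a y)) • (what * J2c) + bb y • (what * Pc) := by
    rw [hwf]
    funext y
    show what * gmat (a y) (bb y) = _
    rw [gmat]
    simp only [mul_add, mul_one, Matrix.mul_smul]
  have hwD : HasDerivAt w ((Real.cos (a x) * a') • (what * Jc)
      + (Real.sin (a x) * a') • (what * J2c) + b' • (what * Pc)) x := by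
    rw [hwf2]
    apply hasDerivAt_matrix
    intro i j
    simp only [Matrix.add_apply, Matrix.smul_apply, smul_eq_mul]
    simpa only [zero_add, Pi.add_def] using
      (((hasDerivAt_const x (what i j)).add (hsin.mul_const ((what * Jc) i j))).add
        (hcos.mul_const ((what * J2c) i j))).add (hbD.mul_const ((what * Pc) i j))
  have hderiv : deriv w x = what * ((Real.cos (a x) * a') • Jc
      + (Real.sin (a x) * a') • J2c + b' • Pc) := by
    erw [hwD.deriv]
    simp only [mul_add, Matrix.mul_smul]
  obtain ⟨hv, hdet, hpos⟩ := hvp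
  have huv : (η3 * vᵀ * η3) * v = 1 := by
    have h2 : η3 * (vᵀ * η3 * v) = η3 * η3 := by rw [hv]
    simp only [Matrix.mul_assoc] at h2 ⊢
    rw [h2]
    have := eta_eta
    simpa using this
  set Winv := pmat (η3 * vᵀ * η3) (-((η3 * vᵀ * η3) *ᵥ xv)) with hWd
  have hWinv : Winv * what = 1 := by
    rw [hWd, hwe]; exact pmat_inv_mul _ _ _ huv
  have hFw : (gmat (-(a x)) (-(bb x)) * Winv) * w x = 1 := by
    simp only [hwf]
    rw [Matrix.mul_assoc, ← Matrix.mul_assoc Winv, hWinv, Matrix.one_mul]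
    exact gmat_mul_inv _ _
  have hinv : (w x)⁻¹ = gmat (-(a x)) (-(bb x)) * Winv := Matrix.inv_eq_left_inv hFw
  rw [hinv, hderiv]
  have hmul : (gmat (-(a x)) (-(bb x)) * Winv) * (what * ((Real.cos (a x) * a') • Jc
      + (Real.sin (a x) * a') • J2c + b' • Pc)) = a' • Jc + b' • Pc := by
    rw [Matrix.mul_assoc, ← Matrix.mul_assoc Winv, hWinv, Matrix.one_mul]
    exact gmat_inv_mul_D _ _ _ _
  rw [hmul, pair_val]
  have hlast : deriv (fun y => μ * s * φ₀ y / (2 * Real.pi)) x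
      = μ * s * deriv φ₀ x / (2 * Real.pi) :=
    ((HasDerivAt.const_mul (μ * s) ((hφ₀ x).hasDerivAt)).div_const (2 * Real.pi)).deriv
  rw [hlast, ha', hb']
  ring
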